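/- Let n ≥ 2, N = 2^n, and let u : Fin N → ℂ satisfy ‖u j‖ = 1 for all j. Then there exist Φ ∈ ℝ, an angle α_0 ∈ ℝ, angles α_S ∈ ℝ for every nonempty subset S ⊆ {1, …, n−1}, and v : Fin 2^(n−1) → ℂ with ‖v k‖ = 1 for all k, such that for every j ∈ Fin N (with last bit b_n = j mod 2): u(j) = exp(i·Φ) · (∏_{S nonempty ⊆ {1,…,n−1}} e_S(α_S)(j)) · exp(i·α_0·(−1)^(1 + b_n)/2) · v(⌊j/2⌋). Equivalently, Matrix.diagonal u equals exp(i·Φ) times the product of the commuting diagonal matrices Λ_S[R_z(α_S)] over all nonempty S, times I_{2^(n−1)} ⊗ R_z(α_0), times (Matrix.diagonal v) ⊗ I_2. -/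

import Mathlib

lemma bits_sum (M : ℕ) : ∀ k, ∑ i ∈ Finset.range M, (if Nat.testBit k i then 2^i else 0) = k % 2^M := by
  induction M with
  | zero => intro k; simp [Nat.mod_one]
  | succ M ih =>
    intro k
    rw [Finset.sum_range_succ']
    have h1 : ∀ i, (if Nat.testBit k (i+1) then 2^(i+1) else 0) =
        2 * (if Nat.testBit (k/2) i then 2^i else 0) := by
      intro i
      rw [Nat.testBit_add_one]
      split <;> ring
    simp only [h1]
    rw [← Finset.mul_sum, ih]
    have h2 : k % 2^(M+1) = k % 2 + 2 * (k/2 % 2^M) := by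
      rw [pow_succ, mul_comm (2^M) 2, Nat.mod_mul]
    have h3 : (if Nat.testBit k 0 then 2^0 else 0) = k % 2 := by
      rw [Nat.testBit_zero]
      rcases Nat.mod_two_eq_zero_or_one k with h | h <;> simp [h]
    omega

lemma neg_one_pow_sum (B : Finset ℕ) :
    ∑ T ∈ B.powerset, (-1:ℝ)^T.card = if B = ∅ then 1 else 0 := by
  have := @Finset.sum_powerset_neg_one_pow_card ℕ _ B
  have h : ((∑ m ∈ B.powerset, (-1 : ℤ) ^ m.card : ℤ) : ℝ) = ∑ T ∈ B.powerset, (-1:ℝ)^T.card := by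
    push_cast; rfl
  rw [← h, this]
  split <;> simp


lemma mobius (B : Finset ℕ) (g : Finset ℕ → ℝ) :
    ∑ T ∈ B.powerset, ∑ T' ∈ T.powerset, (-1:ℝ)^(T.card - T'.card) * g T' = g B := by
  rw [Finset.sum_comm' (s := B.powerset) (t := fun T => T.powerset)
      (t' := B.powerset) (s' := fun T' => B.powerset.filter (fun T => T' ⊆ T))
      (h := by
        intro T T'
        simp only [Finset.mem_powerset, Finset.mem_filter]
        constructor
        · rintro ⟨h1, h2⟩; exact ⟨⟨h1, h2⟩, h2.trans h1⟩
        · rintro ⟨⟨h1, h2⟩, h3⟩; exact ⟨h1, h2⟩)]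
  have key : ∀ T' ∈ B.powerset,
      (∑ T ∈ B.powerset.filter (fun T => T' ⊆ T), (-1:ℝ)^(T.card - T'.card) * g T')
        = (if T' = B then 1 else 0) * g T' := by
    intro T' hT'
    rw [Finset.mem_powerset] at hT'
    rw [← Finset.sum_mul]
    congr 1
    have : (if T' = B then (1:ℝ) else 0) = if B \ T' = ∅ then 1 else 0 := by
      have : B \ T' = ∅ ↔ T' = B := by
        rw [Finset.sdiff_eq_empty_iff_subset]
        exact ⟨fun h => Finset.Subset.antisymm hT' h, fun h => h ▸ le_refl _⟩
      simp [this]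
    rw [this, ← neg_one_pow_sum (B \ T')]
    refine Finset.sum_nbij' (fun T => T \ T') (fun U => T' ∪ U) ?_ ?_ ?_ ?_ ?_
    · intro T hT
      simp only [Finset.mem_filter, Finset.mem_powerset] at hT ⊢
      exact Finset.sdiff_subset_sdiff hT.1 (le_refl _)
    · intro U hU
      simp only [Finset.mem_powerset, Finset.mem_filter] at hU ⊢
      constructor
      · exact Finset.union_subset hT' (hU.trans Finset.sdiff_subset)
      · exact Finset.subset_union_left
    · intro T hT
      simp only [Finset.mem_filter, Finset.mem_powerset] at hT
      exact Finset.union_sdiff_of_subset hT.2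
    · intro U hU
      simp only [Finset.mem_powerset] at hU
      have hd : Disjoint T' U := Finset.disjoint_of_subset_right hU Finset.disjoint_sdiff
      show (T' ∪ U) \ T' = U
      rw [Finset.union_sdiff_cancel_left hd]
    · intro T hT
      simp only [Finset.mem_filter, Finset.mem_powerset] at hT
      congr 1
      rw [Finset.card_sdiff_of_subset hT.2]
  rw [Finset.sum_congr rfl key]
  simp



/-- For `n ≥ 1` and `j < 2^n`, the quotient `j / 2` is a valid `(n-1)`-qubit index. -/
lemma div2_lt {n : ℕ} (hn : 1 ≤ n) (j : Fin (2^n)) : (j : ℕ) / 2 < 2^(n-1) := by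
  have h : (2:ℕ)^n = 2^(n-1) * 2 := by
    conv_lhs => rw [show n = (n-1) + 1 by omega]
    rw [pow_succ]
  have hj := j.isLt
  omega

/-- Diagonal entries of the controlled rotation `Λ_S[R_z(α)]` on `n` qubits (line `l`
holds bit position `n - l`): `exp(∓i·α/2)` (sign by the last bit `b_n`) when `b_k = 1`
for all `k ∈ S`, and `1` otherwise. -/
noncomputable def eS (n : ℕ) (S : Finset ℕ) (α : ℝ) (m : Fin (2^n)) : ℂ :=
  if ∀ k ∈ S, Nat.testBit (m : ℕ) (n - k) = true then
    (if Nat.testBit (m : ℕ) 0 = true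
      then Complex.exp (Complex.I * (α : ℂ) / 2)
      else Complex.exp (-(Complex.I * (α : ℂ) / 2)))
  else 1

/-- every diagonal unitary `u` on `n ≥ 2` qubits decomposes as a global
phase times the product of controlled rotations `Λ_S[R_z(α_S)]` over all nonempty
`S ⊆ {1, …, n-1}`, times `I ⊗ R_z(α₀)` on the last line, times a diagonal `v` on the
first `n-1` lines (entrywise: the last bit is `b_n = j % 2`). -/
theorem diagonal_decomposes_via_controlled_rotations (n : ℕ) (hn : 2 ≤ n)
    (u : Fin (2^n) → ℂ) (hu : ∀ j, ‖u j‖ = 1) :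
    ∃ (Φ α₀ : ℝ) (αf : Finset ℕ → ℝ) (v : Fin (2^(n-1)) → ℂ),
      (∀ k, ‖v k‖ = 1) ∧
      ∀ j : Fin (2^n),
        u j = Complex.exp (Complex.I * (Φ : ℂ)) *
          (∏ S ∈ (Finset.Icc 1 (n-1)).powerset.erase ∅, eS n S (αf S) j) *
          Complex.exp (Complex.I * (α₀ : ℂ) * (-1)^(1 + (j : ℕ) % 2) / 2) *
          v ⟨(j : ℕ) / 2, div2_lt (by omega) j⟩ := by
  classical
  set m := n - 1 with hmdef
  have hn' : n = m + 1 := by omega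
  have hm1 : 1 ≤ m := by omega
  have hpow : (2:ℕ)^n = 2^m * 2 := by rw [hn', pow_succ]
  -- the relative phase angles
  set θ : ℕ → ℝ := fun k =>
    if h : 2*k+1 < 2^n then Complex.arg (u ⟨2*k+1, h⟩ / u ⟨2*k, by omega⟩) else 0 with hθdef
  have hunz : ∀ j : Fin (2^n), u j ≠ 0 := fun j => by
    intro h; have := hu j; rw [h] at this; simp at this
  have hexp : ∀ (k : ℕ) (h : 2*k+1 < 2^n),
      Complex.exp (Complex.I * (θ k : ℂ)) = u ⟨2*k+1, h⟩ / u ⟨2*k, by omega⟩ := by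
    intro k h
    have hd : θ k = Complex.arg (u ⟨2*k+1, h⟩ / u ⟨2*k, by omega⟩) := by
      rw [hθdef]; exact dif_pos h
    set z : ℂ := u ⟨2*k+1, h⟩ / u ⟨2*k, by omega⟩ with hz
    have habs : ‖z‖ = 1 := by
      rw [hz, norm_div]
      rw [hu, hu]; norm_num
    have := Complex.norm_mul_exp_arg_mul_I z
    rw [habs] at this
    rw [hd, mul_comm]
    simpa using this
  -- the angle coefficients (Walsh / Möbius transform)
  have h2lt : ∀ k : ℕ, k < 2^(n-1) → 2*k < 2^n := by
    intro k hk
    have h : (2:ℕ)^n = 2^(n-1) * 2 := by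
      conv_lhs => rw [show n = (n-1) + 1 by omega]
      rw [pow_succ]
    omega
  set g : Finset ℕ → ℝ := fun T => θ (∑ i ∈ T, 2^i) with hgdef
  set β : Finset ℕ → ℝ := fun T => ∑ T' ∈ T.powerset, (-1:ℝ)^(T.card - T'.card) * g T'
    with hβdef
  refine ⟨0, β ∅, fun S => β (S.image (fun l => m - l)),
    fun k => u ⟨2*(k:ℕ), h2lt _ k.isLt⟩ *
      Complex.exp (Complex.I * (θ (k:ℕ) : ℂ) / 2), ?_, ?_⟩
  · intro k
    rw [norm_mul, hu]
    rw [Complex.norm_exp]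
    norm_num [Complex.mul_re]
  intro j
  set k : ℕ := (j:ℕ)/2 with hkdef
  have hk : k < 2^m := div2_lt (by omega) j
  have hb : (j:ℕ) % 2 = 0 ∨ (j:ℕ) % 2 = 1 := Nat.mod_two_eq_zero_or_one _
  have h2k1 : 2*k+1 < 2^n := by have := j.isLt; omega
  -- the sign factor
  set s : ℂ := if Nat.testBit (j:ℕ) 0 = true then Complex.I/2 else -(Complex.I/2) with hsdef
  set bits : Finset ℕ := (Finset.range m).filter (fun i => Nat.testBit k i) with hbitsdef
  -- Step: bit translation
  have hbit : ∀ l, 1 ≤ l → l ≤ m → Nat.testBit (j:ℕ) (n - l) = Nat.testBit k (m - l) := by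
    intro l h1 h2
    have : n - l = (m - l) + 1 := by omega
    rw [this, Nat.testBit_add_one]
  -- Step 1: each factor of the product
  have hfac : ∀ S : Finset ℕ, eS n S (β (S.image (fun l => m - l))) j =
      if (∀ l ∈ S, Nat.testBit (j:ℕ) (n - l) = true)
        then Complex.exp (s * (β (S.image (fun l => m - l)) : ℂ)) else 1 := by
    intro S
    unfold eS
    set α : ℝ := β (S.image (fun l => m - l))
    split
    · rw [hsdef]
      split
      · congr 1; ring
      · congr 1; ring
    · rfl
  -- Step 2: product = exp of sum
  have hprod : (∏ S ∈ (Finset.Icc 1 m).powerset.erase ∅,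
        eS n S (β (S.image (fun l => m - l))) j) =
      Complex.exp (s * ((∑ T ∈ bits.powerset.erase ∅, β T : ℝ) : ℂ)) := by
    calc (∏ S ∈ (Finset.Icc 1 m).powerset.erase ∅, eS n S (β (S.image (fun l => m - l))) j)
        = ∏ S ∈ ((Finset.Icc 1 m).powerset.erase ∅).filter
            (fun S => ∀ l ∈ S, Nat.testBit (j:ℕ) (n - l) = true),
            Complex.exp (s * (β (S.image (fun l => m - l)) : ℂ)) := by
          rw [Finset.prod_filter]
          exact Finset.prod_congr rfl (fun S _ => hfac S)
      _ = Complex.exp (∑ S ∈ ((Finset.Icc 1 m).powerset.erase ∅).filter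
            (fun S => ∀ l ∈ S, Nat.testBit (j:ℕ) (n - l) = true),
            s * (β (S.image (fun l => m - l)) : ℂ)) := (Complex.exp_sum _ _).symm
      _ = Complex.exp (s * ((∑ T ∈ bits.powerset.erase ∅, β T : ℝ) : ℂ)) := by
          rw [← Finset.mul_sum]
          congr 1
          push_cast
          congr 1
          refine Finset.sum_nbij' (fun S => S.image (fun l => m - l))
            (fun T => T.image (fun i => m - i)) ?_ ?_ ?_ ?_ ?_
          · intro S hS
            simp only [Finset.mem_filter, Finset.mem_erase, Finset.mem_powerset] at hS
            obtain ⟨⟨hSne, hSsub⟩, hScond⟩ := hS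
            simp only [Finset.mem_erase, Finset.mem_powerset]
            constructor
            · intro h
              exact hSne (Finset.image_eq_empty.mp h)
            · intro i hi
              simp only [Finset.mem_image] at hi
              obtain ⟨l, hl, rfl⟩ := hi
              have hl' := hSsub hl
              simp only [Finset.mem_Icc] at hl'
              rw [hbitsdef]
              simp only [Finset.mem_filter, Finset.mem_range]
              refine ⟨by omega, ?_⟩
              rw [← hbit l hl'.1 hl'.2]
              exact hScond l hl
          · intro T hT
            simp only [Finset.mem_erase, Finset.mem_powerset] at hT
            obtain ⟨hTne, hTsub⟩ := hT
            simp only [Finset.mem_filter, Finset.mem_erase, Finset.mem_powerset]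
            have hmem : ∀ i ∈ T, i < m ∧ Nat.testBit k i = true := by
              intro i hi
              have := hTsub hi
              rw [hbitsdef] at this
              simp only [Finset.mem_filter, Finset.mem_range] at this
              exact this
            refine ⟨⟨?_, ?_⟩, ?_⟩
            · intro h
              exact hTne (Finset.image_eq_empty.mp h)
            · intro l hl
              simp only [Finset.mem_image] at hl
              obtain ⟨i, hi, rfl⟩ := hl
              have := (hmem i hi).1
              simp only [Finset.mem_Icc]
              omega
            · intro l hl
              simp only [Finset.mem_image] at hl
              obtain ⟨i, hi, rfl⟩ := hl
              have h1 := (hmem i hi).1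
              rw [hbit (m - i) (by omega) (by omega), show m - (m - i) = i by omega]
              exact (hmem i hi).2
          · intro S hS
            simp only [Finset.mem_filter, Finset.mem_erase, Finset.mem_powerset] at hS
            obtain ⟨⟨hSne, hSsub⟩, _⟩ := hS
            ext a
            simp only [Finset.mem_image]
            constructor
            · rintro ⟨x, ⟨y, hy, rfl⟩, rfl⟩
              have := hSsub hy
              simp only [Finset.mem_Icc] at this
              rwa [show m - (m - y) = y by omega]
            · intro ha
              have := hSsub ha
              simp only [Finset.mem_Icc] at this
              exact ⟨m - a, ⟨a, ha, rfl⟩, by omega⟩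
          · intro T hT
            simp only [Finset.mem_erase, Finset.mem_powerset] at hT
            obtain ⟨_, hTsub⟩ := hT
            have hmem : ∀ i ∈ T, i < m := by
              intro i hi
              have := hTsub hi
              rw [hbitsdef] at this
              simp only [Finset.mem_filter, Finset.mem_range] at this
              exact this.1
            ext a
            simp only [Finset.mem_image]
            constructor
            · rintro ⟨x, ⟨y, hy, rfl⟩, rfl⟩
              have := hmem y hy
              rwa [show m - (m - y) = y by omega]
            · intro ha
              have := hmem a ha
              exact ⟨m - a, ⟨a, ha, rfl⟩, by omega⟩
          · intro S hS
            rfl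
  -- Step 3: total Möbius sum
  have hsum : (∑ T ∈ bits.powerset, β T) = θ k := by
    have := mobius bits g
    rw [hβdef]
    rw [this]
    show θ (∑ i ∈ bits, 2^i) = θ k
    congr 1
    rw [hbitsdef, Finset.sum_filter, bits_sum]
    exact Nat.mod_eq_of_lt hk
  have hsplit : β ∅ + (∑ T ∈ bits.powerset.erase ∅, β T) = θ k := by
    rw [← hsum]
    exact Finset.add_sum_erase _ β (Finset.mem_powerset.2 (Finset.empty_subset _))
  -- Step 4: the α₀ factor
  have hα₀ : Complex.exp (Complex.I * ((β ∅ : ℝ) : ℂ) * (-1)^(1 + (j:ℕ) % 2) / 2) =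
      Complex.exp (s * ((β ∅ : ℝ) : ℂ)) := by
    rcases hb with h | h
    · have : Nat.testBit (j:ℕ) 0 = false := by
        rw [Nat.testBit_zero]; simp [h]
      rw [hsdef, this]
      simp only [Bool.false_eq_true, if_false, h]
      congr 1
      norm_num
      ring
    · have : Nat.testBit (j:ℕ) 0 = true := by
        rw [Nat.testBit_zero]; simp [h]
      rw [hsdef, this]
      simp only [if_true, h]
      congr 1
      norm_num
      ring
  -- now put everything together
  rw [hprod, hα₀]
  have hij : (⟨(j:ℕ)/2, div2_lt (by omega) j⟩ : Fin (2^(n-1))) = ⟨k, hk⟩ := rfl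
  rw [hij]
  simp only []
  rw [show Complex.exp (Complex.I * ((0:ℝ):ℂ)) = 1 by norm_num, one_mul]
  rw [← Complex.exp_add, ← mul_add]
  have hcast : ((∑ T ∈ bits.powerset.erase ∅, β T : ℝ) : ℂ) + ((β ∅ : ℝ) : ℂ)
      = ((θ k : ℝ) : ℂ) := by
    push_cast
    rw [← hsplit]
    push_cast
    ring
  rw [hcast]
  -- final case analysis on the last bit
  rcases hb with h | h
  · have hbit0 : Nat.testBit (j:ℕ) 0 = false := by rw [Nat.testBit_zero]; simp [h]
    rw [hsdef, hbit0]
    simp only [Bool.false_eq_true, if_false]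
    have hjval : (j:ℕ) = 2*k := by omega
    have hju : j = (⟨2*k, by omega⟩ : Fin (2^n)) := Fin.ext hjval
    rw [hju]
    rw [mul_comm (u _) (Complex.exp _), ← mul_assoc, ← Complex.exp_add]
    rw [show -(Complex.I/2) * ((θ k : ℝ):ℂ) + Complex.I * ((θ k : ℝ):ℂ) / 2 = 0 by ring]
    rw [Complex.exp_zero, one_mul]
  · have hbit0 : Nat.testBit (j:ℕ) 0 = true := by rw [Nat.testBit_zero]; simp [h]
    rw [hsdef, hbit0]
    simp only [if_true]
    have hjval : (j:ℕ) = 2*k+1 := by omega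
    have hju : j = (⟨2*k+1, h2k1⟩ : Fin (2^n)) := Fin.ext hjval
    rw [hju]
    rw [mul_comm (u _) (Complex.exp _), ← mul_assoc, ← Complex.exp_add]
    rw [show Complex.I/2 * ((θ k : ℝ):ℂ) + Complex.I * ((θ k : ℝ):ℂ) / 2
        = Complex.I * ((θ k : ℝ):ℂ) by ring]
    rw [hexp k h2k1]
    exact (div_mul_cancel₀ _ (hunz _)).symm
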